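/- arXiv:math/0305104 — 2 statements merged into one kernel-verified Lean document; each statement's English description precedes it below -/
import Mathlib

section
/- If f' : [0,1] → ℝ is absolutely continuous, f'' ∈ L¹(0,1), and γ₂ ≤ f''(t) on [0,1], then |Q(f) - P(f)| ≤ (1/12 - √2/32)(S₁ - γ₂), where S₁ = f'(1) - f'(0), Q(f) = ∫₀¹ f - (√2/8)f(0) - (1-√2/4)f(1/2) - (√2/8)f(1), and P(f) = ((4 - 3√2)/96)(f'(1) - f'(0)). -/
open MeasureTheory Real Set

lemma swap_int (g w : ℝ → ℝ) (b : ℝ) (hb : 0 ≤ b)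
    (hg : IntervalIntegrable g volume 0 b) (hw : Continuous w) :
    ∫ t in (0:ℝ)..b, w t * (∫ s in (0:ℝ)..t, g s)
      = ∫ s in (0:ℝ)..b, (∫ t in s..b, w t) * g s := by
  have hgI : IntegrableOn g (Ioc 0 b) volume := hg.1
  set F : ℝ → ℝ → ℝ := fun t s => Set.indicator {p : ℝ × ℝ | p.2 ≤ p.1}
    (fun p => w p.1 * g p.2) (t, s) with hF
  have hInt : Integrable (Function.uncurry F)
      ((volume.restrict (Ioc 0 b)).prod (volume.restrict (Ioc 0 b))) := by
    have h1 : Integrable (fun p : ℝ × ℝ => w p.1 * g p.2)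
        ((volume.restrict (Ioc 0 b)).prod (volume.restrict (Ioc 0 b))) :=
      Integrable.mul_prod (hw.continuousOn.integrableOn_Icc.mono_set Ioc_subset_Icc_self) hgI
    have hS : MeasurableSet {p : ℝ × ℝ | p.2 ≤ p.1} :=
      measurableSet_le measurable_snd measurable_fst
    exact h1.indicator hS
  have key := MeasureTheory.integral_integral_swap hInt
  have hL : (∫ t in Ioc 0 b, ∫ s in Ioc 0 b, F t s) = ∫ t in Ioc 0 b, w t * (∫ s in (0:ℝ)..t, g s) := by
    refine setIntegral_congr_fun measurableSet_Ioc (fun t ht => ?_)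
    have : (fun s => F t s) = (Iic t).indicator (fun s => w t * g s) := by
      ext s; by_cases h : s ≤ t <;> simp [hF, Set.indicator, h]
    rw [this, integral_indicator measurableSet_Iic, Measure.restrict_restrict measurableSet_Iic]
    have hset : Iic t ∩ Ioc 0 b = Ioc 0 t := by
      ext x; simp only [mem_inter_iff, mem_Iic, mem_Ioc]
      constructor
      · rintro ⟨h1, h2, h3⟩; exact ⟨h2, h1⟩
      · rintro ⟨h1, h2⟩; exact ⟨h2, h1, h2.trans ht.2⟩
    rw [hset, intervalIntegral.integral_of_le ht.1.le, integral_const_mul]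
  have hR : (∫ s in Ioc 0 b, ∫ t in Ioc 0 b, F t s) = ∫ s in Ioc 0 b, (∫ t in s..b, w t) * g s := by
    refine setIntegral_congr_fun measurableSet_Ioc (fun s hs => ?_)
    have : (fun t => F t s) = (Ici s).indicator (fun t => w t * g s) := by
      ext t; by_cases h : s ≤ t <;> simp [hF, Set.indicator, h]
    rw [this, integral_indicator measurableSet_Ici, Measure.restrict_restrict measurableSet_Ici]
    have hset : Ici s ∩ Ioc 0 b = Icc s b := by
      ext x; simp only [mem_inter_iff, mem_Ici, mem_Ioc, mem_Icc]
      exact ⟨fun ⟨h1, _, h3⟩ => ⟨h1, h3⟩, fun ⟨h1, h2⟩ => ⟨h1, hs.1.trans_le h1, h2⟩⟩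
    rw [hset, integral_Icc_eq_integral_Ioc, intervalIntegral.integral_of_le hs.2,
      integral_mul_const]
  rw [intervalIntegral.integral_of_le hb, intervalIntegral.integral_of_le hb, ← hL, ← hR]
  exact key

lemma poly_int (a b c d e : ℝ) :
    ∫ s in a..b, (c + d * s + e * s ^ 2)
      = (c * b + d / 2 * b ^ 2 + e / 3 * b ^ 3) - (c * a + d / 2 * a ^ 2 + e / 3 * a ^ 3) := by
  have hd : ∀ x : ℝ, HasDerivAt (fun y => c * y + d / 2 * y ^ 2 + e / 3 * y ^ 3)
      (c + d * x + e * x ^ 2) x := by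
    intro x
    have h := (((hasDerivAt_id x).const_mul c).add ((hasDerivAt_pow 2 x).const_mul (d / 2))).add
      ((hasDerivAt_pow 3 x).const_mul (e / 3))
    exact h.congr_deriv (by ring)
  rw [intervalIntegral.integral_eq_sub_of_hasDerivAt (fun x _ => hd x)
    ((Continuous.intervalIntegrable (by continuity) a b))]

lemma swap_one (g : ℝ → ℝ) (b : ℝ) (hb : 0 ≤ b) (hg : IntervalIntegrable g volume 0 b) :
    (∫ t in (0:ℝ)..b, (∫ s in (0:ℝ)..t, g s)) = ∫ s in (0:ℝ)..b, (b - s) * g s := by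
  have h := swap_int g (fun _ => 1) b hb hg continuous_const
  simpa using h

lemma swap_lin (g : ℝ → ℝ) (hg : IntervalIntegrable g volume 0 1) :
    (∫ t in (0:ℝ)..1, (1 - t) * (∫ s in (0:ℝ)..t, g s))
      = ∫ s in (0:ℝ)..1, ((1 - s) ^ 2 / 2) * g s := by
  have h := swap_int g (fun t => 1 - t) 1 (by norm_num) hg (by continuity)
  rw [h]
  apply intervalIntegral.integral_congr
  intro s _
  have hw : (∫ t in s..(1:ℝ), ((1:ℝ) - t)) = (1 - s) ^ 2 / 2 := by
    have h0 : (fun t : ℝ => (1:ℝ) - t) = fun t : ℝ => 1 + (-1) * t + 0 * t ^ 2 := by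
      funext t; ring
    rw [h0, poly_int]; ring
  show (∫ t in s..(1:ℝ), ((1:ℝ) - t)) * g s = (1 - s) ^ 2 / 2 * g s
  rw [hw]

lemma q1bound (s : ℝ) (h0 : 0 ≤ s) (h1 : s ≤ 1/2) :
    |s ^ 2 / 2 - Real.sqrt 2 / 8 * s - (1/24 - Real.sqrt 2 / 32)|
      ≤ 1/12 - Real.sqrt 2 / 32 := by
  have hsq : Real.sqrt 2 ^ 2 = 2 := Real.sq_sqrt (by norm_num)
  have hsnn : (0:ℝ) ≤ Real.sqrt 2 := Real.sqrt_nonneg 2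
  have hub : Real.sqrt 2 ≤ 1.5 := by nlinarith [hsq, hsnn]
  have hlb : (1.4:ℝ) ≤ Real.sqrt 2 := by nlinarith [hsq, hsnn]
  rw [abs_le]
  constructor
  · nlinarith [sq_nonneg (s - Real.sqrt 2 / 8), hsq]
  · nlinarith [mul_nonneg (sub_nonneg.2 h1) h0, hub, h0, h1]

theorem stmt_15 (f f' f'' : ℝ → ℝ) (γ₂ : ℝ)
    (hf : ∀ t ∈ Icc (0:ℝ) 1, f t = f 0 + ∫ s in (0:ℝ)..t, f' s)
    (hac : ∀ t ∈ Icc (0:ℝ) 1, f' t = f' 0 + ∫ s in (0:ℝ)..t, f'' s)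
    (hint : IntervalIntegrable f'' volume 0 1)
    (hbd : ∀ t ∈ Icc (0:ℝ) 1, γ₂ ≤ f'' t) :
    |((∫ t in (0:ℝ)..1, f t) - Real.sqrt 2 / 8 * f 0
        - (1 - Real.sqrt 2 / 4) * f (1/2) - Real.sqrt 2 / 8 * f 1)
      - (4 - 3 * Real.sqrt 2) / 96 * (f' 1 - f' 0)|
      ≤ (1/12 - Real.sqrt 2 / 32) * ((f' 1 - f' 0) - γ₂) := by
  set g : ℝ → ℝ := fun s => f'' s - γ₂ with hgdef
  have hgint : IntervalIntegrable g volume 0 1 := hint.sub intervalIntegrable_const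
  have hg0 : ∀ s ∈ Icc (0:ℝ) 1, 0 ≤ g s := fun s hs => sub_nonneg.2 (hbd s hs)
  set G : ℝ → ℝ := fun t => ∫ s in (0:ℝ)..t, g s with hGdef
  have hGcont : ContinuousOn G (Icc 0 1) := by
    have := intervalIntegral.continuousOn_primitive_interval' hgint
      (a := 0) (by simp)
    simpa [uIcc_of_le (by norm_num : (0:ℝ) ≤ 1)] using this
  have hsub : ∀ t ∈ Icc (0:ℝ) 1, IntervalIntegrable g volume 0 t := by
    intro t ht
    apply hgint.mono_set
    rw [uIcc_of_le ht.1, uIcc_of_le (by norm_num : (0:ℝ) ≤ 1)]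
    exact Icc_subset_Icc le_rfl ht.2
  -- f'' integral decomposition on [0,t] for t ∈ [0,1]
  have hff : ∀ t ∈ Icc (0:ℝ) 1, (∫ s in (0:ℝ)..t, f'' s) = γ₂ * t + G t := by
    intro t ht
    have h2 : (∫ s in (0:ℝ)..t, f'' s) = ∫ s in (0:ℝ)..t, (g s + γ₂) := by
      apply intervalIntegral.integral_congr; intro s _; simp [hgdef]
    rw [h2, intervalIntegral.integral_add (hsub t ht) intervalIntegrable_const,
      intervalIntegral.integral_const]
    simp [hGdef]; ring
  -- explicit form of f' on [0,1]
  have hf' : ∀ t ∈ Icc (0:ℝ) 1, f' t = f' 0 + γ₂ * t + G t := by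
    intro t ht; rw [hac t ht, hff t ht]; ring
  have hf'cont : ContinuousOn f' (Icc 0 1) := by
    have : ContinuousOn (fun t => f' 0 + γ₂ * t + G t) (Icc 0 1) :=
      (continuousOn_const.add (continuousOn_const.mul continuousOn_id)).add hGcont
    exact this.congr hf'
  have hf'int : IntervalIntegrable f' volume 0 1 := by
    apply ContinuousOn.intervalIntegrable
    rwa [uIcc_of_le (by norm_num : (0:ℝ) ≤ 1)]
  have h14 : f' 1 - f' 0 = γ₂ + G 1 := by
    have := hf' 1 (by norm_num); rw [this]; ring
  have hG1 : G 1 = ∫ s in (0:ℝ)..1, g s := rfl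
  -- primitive of f'
  have hPcont : ContinuousOn (fun t => ∫ s in (0:ℝ)..t, f' s) (Icc 0 1) := by
    have := intervalIntegral.continuousOn_primitive_interval' hf'int (a := 0) (by simp)
    simpa [uIcc_of_le (by norm_num : (0:ℝ) ≤ 1)] using this
  have hPint : IntervalIntegrable (fun t => ∫ s in (0:ℝ)..t, f' s) volume 0 1 := by
    apply ContinuousOn.intervalIntegrable
    rwa [uIcc_of_le (by norm_num : (0:ℝ) ≤ 1)]
  have hGint : ∀ b ∈ Icc (0:ℝ) 1, IntervalIntegrable G volume 0 b := by
    intro b hb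
    apply ContinuousOn.intervalIntegrable
    rw [uIcc_of_le hb.1]
    exact hGcont.mono (Icc_subset_Icc le_rfl hb.2)
  -- e3 generalized : value of ∫ f' on [0,b]
  have hintf' : ∀ b ∈ Icc (0:ℝ) 1, (∫ t in (0:ℝ)..b, f' t)
      = f' 0 * b + γ₂ / 2 * b ^ 2 + ∫ s in (0:ℝ)..b, (b - s) * g s := by
    intro b hb
    have hc : (∫ t in (0:ℝ)..b, f' t) = ∫ t in (0:ℝ)..b, (f' 0 + γ₂ * t + G t) := by
      apply intervalIntegral.integral_congr
      intro t ht
      rw [uIcc_of_le hb.1] at ht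
      exact hf' t ⟨ht.1, ht.2.trans hb.2⟩
    have hpint : IntervalIntegrable (fun t => f' 0 + γ₂ * t) volume 0 b :=
      ((continuous_const.add (continuous_const.mul continuous_id)).intervalIntegrable _ _)
    rw [hc, show (fun t => f' 0 + γ₂ * t + G t) = fun t => (f' 0 + γ₂ * t) + G t from rfl,
      intervalIntegral.integral_add hpint (hGint b hb), swap_one g b hb.1 (hsub b hb)]
    have h0 : (fun t : ℝ => f' 0 + γ₂ * t) = fun t : ℝ => f' 0 + γ₂ * t + 0 * t ^ 2 := by
      funext t; ring
    rw [h0, poly_int]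
    ring
  have u01 : uIcc (0:ℝ) 1 = Icc 0 1 := uIcc_of_le (by norm_num)
  have e3 : f 1 = f 0 + (f' 0 + γ₂ / 2) + ∫ s in (0:ℝ)..1, (1 - s) * g s := by
    rw [hf 1 (by norm_num), hintf' 1 (by norm_num)]; ring
  have e2 : f (1/2) = f 0 + (f' 0 / 2 + γ₂ / 8) + ∫ s in (0:ℝ)..(1/2:ℝ), (1/2 - s) * g s := by
    rw [hf (1/2) (by norm_num), hintf' (1/2) (by norm_num)]; ring
  have e1 : (∫ t in (0:ℝ)..1, f t)
      = f 0 + (f' 0 / 2 + γ₂ / 6) + ∫ s in (0:ℝ)..1, ((1 - s) ^ 2 / 2) * g s := by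
    have hc : (∫ t in (0:ℝ)..1, f t) = ∫ t in (0:ℝ)..1, (f 0 + ∫ s in (0:ℝ)..t, f' s) := by
      apply intervalIntegral.integral_congr
      intro t ht; rw [u01] at ht; exact hf t ht
    rw [hc, intervalIntegral.integral_add intervalIntegrable_const hPint,
      intervalIntegral.integral_const, swap_one f' 1 (by norm_num) hf'int]
    have hA : IntervalIntegrable (fun s : ℝ => (1 - s) * (f' 0 + γ₂ * s)) volume 0 1 :=
      (((continuous_const.sub continuous_id).mul
        (continuous_const.add (continuous_const.mul continuous_id))).intervalIntegrable _ _)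
    have hB : IntervalIntegrable (fun s : ℝ => (1 - s) * G s) volume 0 1 := by
      apply ContinuousOn.intervalIntegrable
      rw [u01]
      exact (continuousOn_const.sub continuousOn_id).mul hGcont
    have hc2 : (∫ s in (0:ℝ)..1, (1 - s) * f' s)
        = ∫ s in (0:ℝ)..1, ((fun s : ℝ => (1 - s) * (f' 0 + γ₂ * s)) s + (fun s : ℝ => (1 - s) * G s) s) := by
      apply intervalIntegral.integral_congr
      intro s hs; rw [u01] at hs
      simp only
      rw [hf' s hs]; ring
    have hswl : (∫ t in (0:ℝ)..1, (1 - t) * G t) = ∫ s in (0:ℝ)..1, ((1 - s) ^ 2 / 2) * g s :=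
      swap_lin g hgint
    rw [hc2, intervalIntegral.integral_add hA hB, hswl]
    have h0 : (fun s : ℝ => (1 - s) * (f' 0 + γ₂ * s))
        = fun s : ℝ => f' 0 + (γ₂ - f' 0) * s + (-γ₂) * s ^ 2 := by
      funext t; ring
    rw [h0, poly_int]
    simp only [smul_eq_mul]
    ring
  -- integrability helpers
  have hmul : ∀ (w : ℝ → ℝ) (a b : ℝ), IntervalIntegrable g volume a b → Continuous w →
      IntervalIntegrable (fun s => w s * g s) volume a b := by
    intro w a b hgab hw
    exact hgab.continuousOn_mul hw.continuousOn
  have hg1 : IntervalIntegrable g volume 0 (1/2) := hsub (1/2) (by norm_num)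
  have hg2 : IntervalIntegrable g volume (1/2) 1 := by
    apply hgint.mono_set
    rw [u01, uIcc_of_le (by norm_num : (1/2:ℝ) ≤ 1)]
    exact Icc_subset_Icc (by norm_num) le_rfl
  have cw1 : Continuous (fun s : ℝ => (1 - s) ^ 2 / 2) := by fun_prop
  have cw2 : Continuous (fun s : ℝ => 1/2 - s) := by fun_prop
  have cw3 : Continuous (fun s : ℝ => 1 - s) := by fun_prop
  have cq1 : Continuous (fun s : ℝ => s ^ 2 / 2 - Real.sqrt 2 / 8 * s - (1/24 - Real.sqrt 2 / 32)) := by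
    fun_prop
  have cq2 : Continuous (fun s : ℝ =>
      (1 - s) ^ 2 / 2 - Real.sqrt 2 / 8 * (1 - s) - (1/24 - Real.sqrt 2 / 32)) := by fun_prop
  -- splits
  have hsplA : (∫ s in (0:ℝ)..1, ((1 - s) ^ 2 / 2) * g s)
      = (∫ s in (0:ℝ)..(1/2:ℝ), ((1 - s) ^ 2 / 2) * g s)
        + ∫ s in (1/2:ℝ)..1, ((1 - s) ^ 2 / 2) * g s :=
    (intervalIntegral.integral_add_adjacent_intervals (hmul _ _ _ hg1 cw1) (hmul _ _ _ hg2 cw1)).symm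
  have hsplD : (∫ s in (0:ℝ)..1, (1 - s) * g s)
      = (∫ s in (0:ℝ)..(1/2:ℝ), (1 - s) * g s) + ∫ s in (1/2:ℝ)..1, (1 - s) * g s :=
    (intervalIntegral.integral_add_adjacent_intervals (hmul _ _ _ hg1 cw3) (hmul _ _ _ hg2 cw3)).symm
  have hsplE : (∫ s in (0:ℝ)..1, g s)
      = (∫ s in (0:ℝ)..(1/2:ℝ), g s) + ∫ s in (1/2:ℝ)..1, g s :=
    (intervalIntegral.integral_add_adjacent_intervals hg1 hg2).symm
  have e4 : f' 1 - f' 0 = γ₂ + ((∫ s in (0:ℝ)..(1/2:ℝ), g s) + ∫ s in (1/2:ℝ)..1, g s) := by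
    rw [h14, hG1, hsplE]
  -- combination on [0, 1/2]
  have comb1 : (∫ s in (0:ℝ)..(1/2:ℝ), (s ^ 2 / 2 - Real.sqrt 2 / 8 * s
        - (1/24 - Real.sqrt 2 / 32)) * g s)
      = (∫ s in (0:ℝ)..(1/2:ℝ), ((1 - s) ^ 2 / 2) * g s)
        - (1 - Real.sqrt 2 / 4) * (∫ s in (0:ℝ)..(1/2:ℝ), (1/2 - s) * g s)
        - Real.sqrt 2 / 8 * (∫ s in (0:ℝ)..(1/2:ℝ), (1 - s) * g s)
        - (4 - 3 * Real.sqrt 2) / 96 * (∫ s in (0:ℝ)..(1/2:ℝ), g s) := by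
    rw [← intervalIntegral.integral_const_mul, ← intervalIntegral.integral_const_mul,
      ← intervalIntegral.integral_const_mul,
      ← intervalIntegral.integral_sub (hmul _ _ _ hg1 cw1)
        ((hmul _ _ _ hg1 cw2).const_mul _),
      ← intervalIntegral.integral_sub
        (((hmul _ _ _ hg1 cw1).sub ((hmul _ _ _ hg1 cw2).const_mul _)))
        ((hmul _ _ _ hg1 cw3).const_mul _),
      ← intervalIntegral.integral_sub
        ((((hmul _ _ _ hg1 cw1).sub ((hmul _ _ _ hg1 cw2).const_mul _)).sub
          ((hmul _ _ _ hg1 cw3).const_mul _)))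
        (hg1.const_mul _)]
    apply intervalIntegral.integral_congr
    intro s _
    simp only
    ring
  -- combination on [1/2, 1]
  have comb2 : (∫ s in (1/2:ℝ)..1, ((1 - s) ^ 2 / 2 - Real.sqrt 2 / 8 * (1 - s)
        - (1/24 - Real.sqrt 2 / 32)) * g s)
      = (∫ s in (1/2:ℝ)..1, ((1 - s) ^ 2 / 2) * g s)
        - Real.sqrt 2 / 8 * (∫ s in (1/2:ℝ)..1, (1 - s) * g s)
        - (4 - 3 * Real.sqrt 2) / 96 * (∫ s in (1/2:ℝ)..1, g s) := by
    rw [← intervalIntegral.integral_const_mul, ← intervalIntegral.integral_const_mul,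
      ← intervalIntegral.integral_sub (hmul _ _ _ hg2 cw1)
        ((hmul _ _ _ hg2 cw3).const_mul _),
      ← intervalIntegral.integral_sub
        (((hmul _ _ _ hg2 cw1).sub ((hmul _ _ _ hg2 cw3).const_mul _)))
        (hg2.const_mul _)]
    apply intervalIntegral.integral_congr
    intro s _
    simp only
    ring
  have hsq : Real.sqrt 2 ^ 2 = 2 := Real.sq_sqrt (by norm_num)
  have hsnn : (0:ℝ) ≤ Real.sqrt 2 := Real.sqrt_nonneg 2
  have hb1 : |∫ s in (0:ℝ)..(1/2:ℝ), (s ^ 2 / 2 - Real.sqrt 2 / 8 * s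
        - (1/24 - Real.sqrt 2 / 32)) * g s|
      ≤ (1/12 - Real.sqrt 2 / 32) * ∫ s in (0:ℝ)..(1/2:ℝ), g s := by
    have h1 := intervalIntegral.abs_integral_le_integral_abs (μ := volume)
      (f := fun s => (s ^ 2 / 2 - Real.sqrt 2 / 8 * s - (1/24 - Real.sqrt 2 / 32)) * g s)
      (by norm_num : (0:ℝ) ≤ 1/2)
    have h2 : (∫ s in (0:ℝ)..(1/2:ℝ), |(s ^ 2 / 2 - Real.sqrt 2 / 8 * s
          - (1/24 - Real.sqrt 2 / 32)) * g s|)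
        ≤ ∫ s in (0:ℝ)..(1/2:ℝ), (1/12 - Real.sqrt 2 / 32) * g s := by
      apply intervalIntegral.integral_mono_on (by norm_num)
        ((hmul _ _ _ hg1 cq1).abs) (hg1.const_mul _)
      intro s hs
      have hgs : 0 ≤ g s := hg0 s ⟨hs.1, hs.2.trans (by norm_num)⟩
      rw [abs_mul, abs_of_nonneg hgs]
      apply mul_le_mul_of_nonneg_right _ hgs
      exact q1bound s hs.1 hs.2
    rw [intervalIntegral.integral_const_mul] at h2
    exact h1.trans h2
  have hb2 : |∫ s in (1/2:ℝ)..1, ((1 - s) ^ 2 / 2 - Real.sqrt 2 / 8 * (1 - s)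
        - (1/24 - Real.sqrt 2 / 32)) * g s|
      ≤ (1/12 - Real.sqrt 2 / 32) * ∫ s in (1/2:ℝ)..1, g s := by
    have h1 := intervalIntegral.abs_integral_le_integral_abs (μ := volume)
      (f := fun s => ((1 - s) ^ 2 / 2 - Real.sqrt 2 / 8 * (1 - s)
        - (1/24 - Real.sqrt 2 / 32)) * g s) (by norm_num : (1/2:ℝ) ≤ 1)
    have h2 : (∫ s in (1/2:ℝ)..1, |((1 - s) ^ 2 / 2 - Real.sqrt 2 / 8 * (1 - s)
          - (1/24 - Real.sqrt 2 / 32)) * g s|)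
        ≤ ∫ s in (1/2:ℝ)..1, (1/12 - Real.sqrt 2 / 32) * g s := by
      apply intervalIntegral.integral_mono_on (by norm_num)
        ((hmul _ _ _ hg2 cq2).abs) (hg2.const_mul _)
      intro s hs
      have hgs : 0 ≤ g s := hg0 s ⟨(by linarith [hs.1] : (0:ℝ) ≤ s), hs.2⟩
      rw [abs_mul, abs_of_nonneg hgs]
      apply mul_le_mul_of_nonneg_right _ hgs
      exact q1bound (1 - s) (by linarith [hs.2]) (by linarith [hs.1])
    rw [intervalIntegral.integral_const_mul] at h2
    exact h1.trans h2
  rw [e1, e2, e3, e4, hsplA, hsplD]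
  have h5 : f 0 + (f' 0 / 2 + γ₂ / 6) +
                ((∫ s in (0:ℝ)..(1/2:ℝ), (1 - s) ^ 2 / 2 * g s)
                  + ∫ s in (1/2:ℝ)..1, (1 - s) ^ 2 / 2 * g s) -
              Real.sqrt 2 / 8 * f 0 -
            (1 - Real.sqrt 2 / 4) * (f 0 + (f' 0 / 2 + γ₂ / 8)
              + ∫ s in (0:ℝ)..(1/2:ℝ), (1 / 2 - s) * g s) -
          Real.sqrt 2 / 8 *
            (f 0 + (f' 0 + γ₂ / 2) +
              ((∫ s in (0:ℝ)..(1/2:ℝ), (1 - s) * g s) + ∫ s in (1/2:ℝ)..1, (1 - s) * g s)) -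
        (4 - 3 * Real.sqrt 2) / 96 * (γ₂ + ((∫ s in (0:ℝ)..(1/2:ℝ), g s)
          + ∫ s in (1/2:ℝ)..1, g s))
      = (∫ s in (0:ℝ)..(1/2:ℝ), (s ^ 2 / 2 - Real.sqrt 2 / 8 * s
          - (1/24 - Real.sqrt 2 / 32)) * g s)
        + ∫ s in (1/2:ℝ)..1, ((1 - s) ^ 2 / 2 - Real.sqrt 2 / 8 * (1 - s)
          - (1/24 - Real.sqrt 2 / 32)) * g s := by
    linear_combination (-1 : ℝ) * comb1 - comb2
  rw [h5]
  have hrhs : (1/12 - Real.sqrt 2 / 32) * (γ₂ + ((∫ s in (0:ℝ)..(1/2:ℝ), g s)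
        + ∫ s in (1/2:ℝ)..1, g s) - γ₂)
      = (1/12 - Real.sqrt 2 / 32) * (∫ s in (0:ℝ)..(1/2:ℝ), g s)
        + (1/12 - Real.sqrt 2 / 32) * ∫ s in (1/2:ℝ)..1, g s := by ring
  rw [hrhs]
  refine le_trans (abs_add_le _ _) ?_
  linarith [hb1, hb2]
end

section
/- If f' : [0,1] → ℝ is absolutely continuous with f'' ∈ L²(0,1), then |Q(f) - P(f)| ≤ √(47/23040 - √2/768) · σ(f''), where σ(f'') = (∫₀¹ f''(t)² dt - (f'(1) - f'(0))²)^{1/2}, Q(f) = ∫₀¹ f - (√2/8)f(0) - (1-√2/4)f(1/2) - (√2/8)f(1), and P(f) = ((4 - 3√2)/96)(f'(1) - f'(0)). The constant √(47/23040 - √2/768) is sharp. -/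
open MeasureTheory Real Set


lemma fubw (g w : ℝ → ℝ) (b M : ℝ) (hb : 0 < b) (hM : 0 ≤ M)
    (hg : IntegrableOn g (Ioc 0 b)) (hw : Continuous w)
    (hwM : ∀ t ∈ Ioc (0:ℝ) b, |w t| ≤ M) :
    (∫ t in (0:ℝ)..b, w t * ∫ u in (0:ℝ)..t, g u) = ∫ u in (0:ℝ)..b, (∫ t in u..b, w t) * g u := by
  set μ := volume.restrict (Ioc (0:ℝ) b) with hμ
  haveI : IsFiniteMeasure μ := by
    constructor
    rw [hμ]
    simp [Real.volume_Ioc]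
  have hgi : Integrable g μ := hg
  set Φ : ℝ → ℝ → ℝ := fun t u => (if u ≤ t then w t else 0) * g u with hΦ
  have hsm : AEStronglyMeasurable (Function.uncurry Φ) (μ.prod μ) := by
    apply AEStronglyMeasurable.mul ?_ hgi.1.comp_snd
    have : (fun p : ℝ × ℝ => if p.2 ≤ p.1 then w p.1 else 0)
        = Set.indicator {p : ℝ × ℝ | p.2 ≤ p.1} (fun p => w p.1) := by
      funext p; by_cases h : p.2 ≤ p.1 <;> simp [Set.indicator_apply, h]
    rw [this]
    exact (((hw.comp continuous_fst).stronglyMeasurable).indicator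
      (measurableSet_le measurable_snd measurable_fst)).aestronglyMeasurable
  have hΦi : Integrable (Function.uncurry Φ) (μ.prod μ) := by
    apply Integrable.mono' ((integrable_const M).mul_prod hgi.norm) hsm
    rw [hμ, Measure.prod_restrict]
    filter_upwards [ae_restrict_mem (measurableSet_Ioc.prod measurableSet_Ioc)] with p hp
    have h1 : p.1 ∈ Ioc (0:ℝ) b := hp.1
    by_cases h : p.2 ≤ p.1
    · simp only [Function.uncurry, Φ, if_pos h, norm_mul, Real.norm_eq_abs]
      exact mul_le_mul_of_nonneg_right (hwM _ h1) (abs_nonneg _)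
    · simp only [Function.uncurry, Φ, if_neg h, zero_mul, norm_zero]
      positivity
  have swap := integral_integral_swap hΦi
  calc ∫ t in (0:ℝ)..b, w t * ∫ u in (0:ℝ)..t, g u
      = ∫ t, (w t * ∫ u in (0:ℝ)..t, g u) ∂μ := intervalIntegral.integral_of_le hb.le
    _ = ∫ t, (∫ u, Φ t u ∂μ) ∂μ := by
        apply setIntegral_congr_fun measurableSet_Ioc
        intro t ht
        have e1 : ∫ u in (0:ℝ)..t, g u = ∫ u, (if u ≤ t then g u else 0) ∂μ := by
          rw [intervalIntegral.integral_of_le ht.1.le]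
          have e2 : (fun u => if u ≤ t then g u else 0) = (Iic t).indicator g := by
            funext u; by_cases h : u ≤ t <;> simp [Set.indicator_apply, h]
          rw [e2, integral_indicator measurableSet_Iic, hμ,
            Measure.restrict_restrict measurableSet_Iic]
          have e6 : Iic t ∩ Ioc 0 b = Ioc 0 t := by
            ext u
            constructor
            · rintro ⟨h1, h2, h3⟩; exact ⟨h2, h1⟩
            · rintro ⟨h1, h2⟩; exact ⟨h2, h1, h2.trans ht.2⟩
          rw [e6]
        dsimp only
        rw [e1, ← integral_const_mul]
        congr 1
        funext u
        by_cases h : u ≤ t <;> simp [Φ, h]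
    _ = ∫ u, (∫ t, Φ t u ∂μ) ∂μ := swap
    _ = ∫ u, ((∫ t in u..b, w t) * g u) ∂μ := by
        apply setIntegral_congr_fun measurableSet_Ioc
        intro u hu
        have e3 : ∫ t, Φ t u ∂μ = (∫ t, (if u ≤ t then w t else 0) ∂μ) * g u := by
          simp only [Φ]
          exact integral_mul_const _ _
        dsimp only
        rw [e3]
        congr 1
        have e4 : (fun t => if u ≤ t then w t else 0) = (Ici u).indicator w := by
          funext t; by_cases h : u ≤ t <;> simp [Set.indicator_apply, h]
        rw [e4, integral_indicator measurableSet_Ici, hμ,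
          Measure.restrict_restrict measurableSet_Ici]
        have e5 : Ici u ∩ Ioc 0 b = Icc u b := by
          ext t
          constructor
          · rintro ⟨h1, h2, h3⟩; exact ⟨h1, h3⟩
          · rintro ⟨h1, h2⟩; exact ⟨h1, hu.1.trans_le h1, h2⟩
        rw [e5, integral_Icc_eq_integral_Ioc, intervalIntegral.integral_of_le hu.2]
    _ = ∫ u in (0:ℝ)..b, (∫ t in u..b, w t) * g u :=
        (intervalIntegral.integral_of_le hb.le).symm


noncomputable def KK : ℝ → ℝ := fun t =>
  if t ≤ 1/2 then t^2/2 - Real.sqrt 2 * t/8 else (1-t)^2/2 - Real.sqrt 2 * (1-t)/8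

noncomputable def hh : ℝ → ℝ := fun t => KK t - (4 - 3 * Real.sqrt 2)/96

lemma KK_cont : Continuous KK := by
  unfold KK
  apply Continuous.if_le
  · fun_prop
  · fun_prop
  · exact continuous_id
  · exact continuous_const
  · intro x hx
    rw [hx]
    norm_num

lemma hh_cont : Continuous hh := KK_cont.sub continuous_const

lemma intpoly (a b c0 c1 c2 c3 c4 : ℝ) :
    ∫ u in a..b, (c0 + c1*u + c2*u^2 + c3*u^3 + c4*u^4)
    = (c0*b + c1*b^2/2 + c2*b^3/3 + c3*b^4/4 + c4*b^5/5)
      - (c0*a + c1*a^2/2 + c2*a^3/3 + c3*a^4/4 + c4*a^5/5) := by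
  have key : ∀ x : ℝ, HasDerivAt (fun x : ℝ => c0*x + c1*x^2/2 + c2*x^3/3 + c3*x^4/4 + c4*x^5/5)
      (c0 + c1*x + c2*x^2 + c3*x^3 + c4*x^4) x := by
    intro x
    have h1 : HasDerivAt (fun x : ℝ => c0*x) c0 x := by
      simpa using (hasDerivAt_id x).const_mul c0
    have h2 : HasDerivAt (fun x : ℝ => c1*x^2/2) (c1*x) x := by
      have := ((hasDerivAt_pow 2 x).const_mul c1).div_const 2
      simpa using this.congr_deriv (by ring)
    have h3 : HasDerivAt (fun x : ℝ => c2*x^3/3) (c2*x^2) x := by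
      have := ((hasDerivAt_pow 3 x).const_mul c2).div_const 3
      simpa using this.congr_deriv (by ring)
    have h4 : HasDerivAt (fun x : ℝ => c3*x^4/4) (c3*x^3) x := by
      have := ((hasDerivAt_pow 4 x).const_mul c3).div_const 4
      simpa using this.congr_deriv (by ring)
    have h5 : HasDerivAt (fun x : ℝ => c4*x^5/5) (c4*x^4) x := by
      have := ((hasDerivAt_pow 5 x).const_mul c4).div_const 5
      simpa using this.congr_deriv (by ring)
    exact (((h1.add h2).add h3).add h4).add h5
  rw [intervalIntegral.integral_eq_sub_of_hasDerivAt (fun x _ => key x)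
    ((by fun_prop : Continuous fun u : ℝ => c0 + c1*u + c2*u^2 + c3*u^3 + c4*u^4).intervalIntegrable _ _)]

lemma hs2 : Real.sqrt 2 ^ 2 = 2 := Real.sq_sqrt (by norm_num)

lemma hh_int_zero : ∫ t in (0:ℝ)..1, hh t = 0 := by
  have e1 : ∫ t in (0:ℝ)..(1/2), hh t
      = ∫ t in (0:ℝ)..(1/2), (-((4 - 3*Real.sqrt 2)/96) + (-(Real.sqrt 2/8))*t + (1/2)*t^2 + 0*t^3 + 0*t^4) := by
    apply intervalIntegral.integral_congr
    intro t ht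
    rw [uIcc_of_le (by norm_num)] at ht
    have h : t ≤ 1/2 := ht.2
    simp only [hh, KK, if_pos h]
    ring
  have e2 : ∫ t in (1/2:ℝ)..1, hh t
      = ∫ t in (1/2:ℝ)..1, ((1/2 - Real.sqrt 2/8 - (4 - 3*Real.sqrt 2)/96) + (-1 + Real.sqrt 2/8)*t + (1/2)*t^2 + 0*t^3 + 0*t^4) := by
    apply intervalIntegral.integral_congr
    intro t ht
    rw [uIcc_of_le (by norm_num)] at ht
    simp only [hh, KK]
    by_cases h : t ≤ 1/2
    · have : t = 1/2 := le_antisymm h ht.1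
      rw [if_pos h, this]; ring
    · rw [if_neg h]; ring
  have hsplit : (∫ t in (0:ℝ)..(1/2), hh t) + ∫ t in (1/2:ℝ)..1, hh t = ∫ t in (0:ℝ)..1, hh t :=
    intervalIntegral.integral_add_adjacent_intervals
      (hh_cont.intervalIntegrable _ _) (hh_cont.intervalIntegrable _ _)
  rw [← hsplit, e1, e2, intpoly, intpoly]
  ring

lemma hh_sq_int : ∫ t in (0:ℝ)..1, (hh t)^2 = 47/23040 - Real.sqrt 2/768 := by
  have e1 : ∫ t in (0:ℝ)..(1/2), (hh t)^2
      = ∫ t in (0:ℝ)..(1/2), (((4 - 3*Real.sqrt 2)/96)^2 + (2*(Real.sqrt 2/8)*((4 - 3*Real.sqrt 2)/96))*t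
          + ((Real.sqrt 2/8)^2 - (4 - 3*Real.sqrt 2)/96)*t^2 + (-(Real.sqrt 2/8))*t^3 + (1/4)*t^4) := by
    apply intervalIntegral.integral_congr
    intro t ht
    rw [uIcc_of_le (by norm_num)] at ht
    simp only [hh, KK, if_pos ht.2]
    ring
  have e2 : ∫ t in (1/2:ℝ)..1, (hh t)^2
      = ∫ t in (1/2:ℝ)..1, ((1/2 - Real.sqrt 2/8 - (4 - 3*Real.sqrt 2)/96)^2
          + (2*(-1 + Real.sqrt 2/8)*(1/2 - Real.sqrt 2/8 - (4 - 3*Real.sqrt 2)/96))*t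
          + ((-1 + Real.sqrt 2/8)^2 + 2*(1/2)*(1/2 - Real.sqrt 2/8 - (4 - 3*Real.sqrt 2)/96))*t^2
          + (2*(1/2)*(-1 + Real.sqrt 2/8))*t^3 + (1/4)*t^4) := by
    apply intervalIntegral.integral_congr
    intro t ht
    rw [uIcc_of_le (by norm_num)] at ht
    simp only [hh, KK]
    by_cases h : t ≤ 1/2
    · have : t = 1/2 := le_antisymm h ht.1
      rw [if_pos h, this]; ring
    · rw [if_neg h]; ring
  have hsplit : (∫ t in (0:ℝ)..(1/2), (hh t)^2) + ∫ t in (1/2:ℝ)..1, (hh t)^2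
      = ∫ t in (0:ℝ)..1, (hh t)^2 :=
    intervalIntegral.integral_add_adjacent_intervals
      ((hh_cont.pow 2).intervalIntegrable _ _) ((hh_cont.pow 2).intervalIntegrable _ _)
  rw [← hsplit, e1, e2, intpoly, intpoly]
  have h2 := hs2
  nlinarith [h2]

lemma Cpos : 0 < 47/23040 - Real.sqrt 2/768 := by
  nlinarith [hs2, Real.sqrt_nonneg 2]

lemma keyA (f f' f'' : ℝ → ℝ)
    (hf : ∀ t ∈ Icc (0:ℝ) 1, f t = f 0 + ∫ s in (0:ℝ)..t, f' s)
    (hf' : ∀ t ∈ Icc (0:ℝ) 1, f' t = f' 0 + ∫ s in (0:ℝ)..t, f'' s)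
    (h2 : IntervalIntegrable f'' volume 0 1) :
    ((∫ t in (0:ℝ)..1, f t) - Real.sqrt 2/8 * f 0 - (1 - Real.sqrt 2/4) * f (1/2)
      - Real.sqrt 2/8 * f 1) = ∫ u in (0:ℝ)..1, KK u * f'' u := by
  -- basic integrability facts
  have hsub : ∀ a b : ℝ, a ∈ Icc (0:ℝ) 1 → b ∈ Icc (0:ℝ) 1 →
      IntervalIntegrable f'' volume a b := by
    intro a b ha hb
    apply h2.mono_set
    rw [uIcc_of_le (by norm_num : (0:ℝ) ≤ 1)]
    exact uIcc_subset_Icc ha hb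
  have hgIoc : ∀ t ∈ Icc (0:ℝ) 1, IntegrableOn f'' (Ioc 0 t) volume := by
    intro t ht
    have := (hsub 0 t (by norm_num) ht)
    rw [intervalIntegrable_iff_integrableOn_Ioc_of_le ht.1] at this
    exact this
  set G : ℝ → ℝ := fun t => ∫ s in (0:ℝ)..t, f'' s with hG
  have hIccInt : IntegrableOn f'' (Icc 0 1) volume := by
    rw [integrableOn_Icc_iff_integrableOn_Ioc]
    exact hgIoc 1 (by norm_num)
  have hGc : ContinuousOn G (Icc 0 1) := by
    have := intervalIntegral.continuousOn_primitive_interval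
      (f := f'') (a := 0) (b := 1) (μ := volume)
      (by rwa [uIcc_of_le (by norm_num : (0:ℝ) ≤ 1)])
    rwa [uIcc_of_le (by norm_num : (0:ℝ) ≤ 1)] at this
  have hGint : ∀ t ∈ Icc (0:ℝ) 1, IntervalIntegrable G volume 0 t := by
    intro t ht
    apply ContinuousOn.intervalIntegrable
    rw [uIcc_of_le ht.1]
    exact hGc.mono (Icc_subset_Icc le_rfl ht.2)
  -- pointwise representation of f
  have hfp : ∀ t ∈ Icc (0:ℝ) 1, f t = f 0 + f' 0 * t + ∫ u in (0:ℝ)..t, (t - u) * f'' u := by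
    intro t ht
    rcases eq_or_lt_of_le ht.1 with h0 | h0
    · rw [← h0]
      simp
    · rw [hf t ht]
      have c1 : ∫ s in (0:ℝ)..t, f' s = f' 0 * t + ∫ s in (0:ℝ)..t, G s := by
        have e : ∫ s in (0:ℝ)..t, f' s = ∫ s in (0:ℝ)..t, (f' 0 + G s) := by
          apply intervalIntegral.integral_congr
          intro s hs
          rw [uIcc_of_le ht.1] at hs
          exact hf' s ⟨hs.1, hs.2.trans ht.2⟩
        rw [e, intervalIntegral.integral_add (intervalIntegrable_const) (hGint t ht)]
        simp [mul_comm]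
      have c2 : ∫ s in (0:ℝ)..t, G s = ∫ u in (0:ℝ)..t, (t - u) * f'' u := by
        have := fubw f'' (fun _ => 1) t 1 h0 one_pos.le (hgIoc t ht) continuous_const
          (by intro x _; norm_num)
        simp only [one_mul, intervalIntegral.integral_const, smul_eq_mul, mul_one] at this
        exact this
      rw [c1, c2]
      ring
  -- integral of f over [0,1]
  have hprod : ∀ (w : ℝ → ℝ), Continuous w → ∀ a b : ℝ, a ∈ Icc (0:ℝ) 1 → b ∈ Icc (0:ℝ) 1 →
      IntervalIntegrable (fun u => w u * f'' u) volume a b := by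
    intro w hw a b ha hb
    exact (hsub a b ha hb).continuousOn_mul hw.continuousOn
  set H : ℝ → ℝ := fun t => ∫ u in (0:ℝ)..t, u * f'' u with hH
  have hHc : ContinuousOn H (Icc 0 1) := by
    have hIcc2 : IntegrableOn (fun u => u * f'' u) (Icc 0 1) volume := by
      rw [integrableOn_Icc_iff_integrableOn_Ioc]
      have := hprod (fun u => u) continuous_id 0 1 (by norm_num) (by norm_num)
      rw [intervalIntegrable_iff_integrableOn_Ioc_of_le (by norm_num : (0:ℝ) ≤ 1)] at this
      exact this
    have := intervalIntegral.continuousOn_primitive_interval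
      (f := fun u => u * f'' u) (a := 0) (b := 1) (μ := volume)
      (by rwa [uIcc_of_le (by norm_num : (0:ℝ) ≤ 1)])
    rwa [uIcc_of_le (by norm_num : (0:ℝ) ≤ 1)] at this
  have hint : ∫ t in (0:ℝ)..1, f t
      = f 0 + f' 0 / 2 + ∫ u in (0:ℝ)..1, ((1-u)^2/2) * f'' u := by
    have e : ∫ t in (0:ℝ)..1, f t = ∫ t in (0:ℝ)..1, (f 0 + f' 0 * t + (t * G t - H t)) := by
      apply intervalIntegral.integral_congr
      intro t ht
      rw [uIcc_of_le (by norm_num : (0:ℝ) ≤ 1)] at ht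
      rw [hfp t ht]
      have e2 : ∫ u in (0:ℝ)..t, (t - u) * f'' u
          = ∫ u in (0:ℝ)..t, (t * f'' u - u * f'' u) := by
        apply intervalIntegral.integral_congr
        intro u _
        ring
      have e3 : ∫ u in (0:ℝ)..t, (t * f'' u - u * f'' u)
          = t * G t - H t := by
        rw [intervalIntegral.integral_sub ((hsub 0 t (by norm_num) ht).const_mul t)
          (hprod (fun u => u) continuous_id 0 t (by norm_num) ht), intervalIntegral.integral_const_mul]
      rw [e2, e3]
    rw [e]
    have i1 : IntervalIntegrable (fun t => f 0 + f' 0 * t) volume 0 1 :=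
      (by fun_prop : Continuous fun t : ℝ => f 0 + f' 0 * t).intervalIntegrable _ _
    have i2 : IntervalIntegrable (fun t => t * G t) volume 0 1 := by
      apply ContinuousOn.intervalIntegrable
      rw [uIcc_of_le (by norm_num : (0:ℝ) ≤ 1)]
      exact (continuous_id.continuousOn).mul hGc
    have i3 : IntervalIntegrable H volume 0 1 := by
      apply ContinuousOn.intervalIntegrable
      rw [uIcc_of_le (by norm_num : (0:ℝ) ≤ 1)]
      exact hHc
    rw [intervalIntegral.integral_add i1 (i2.sub i3),
      intervalIntegral.integral_add (intervalIntegrable_const)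
        ((by fun_prop : Continuous fun t : ℝ => f' 0 * t).intervalIntegrable _ _),
      intervalIntegral.integral_sub i2 i3, intervalIntegral.integral_const_mul]
    have c3 : ∫ t in (0:ℝ)..1, t * G t = ∫ u in (0:ℝ)..1, ((1 - u^2)/2) * f'' u := by
      have := fubw f'' id 1 1 one_pos one_pos.le (hgIoc 1 (by norm_num)) continuous_id
        (by intro x hx; simp only [id]; rw [abs_of_pos hx.1]; exact hx.2)
      simp only [id] at this
      rw [this]
      apply intervalIntegral.integral_congr
      intro u _
      dsimp only
      rw [integral_id]
      norm_num
    have c4 : ∫ t in (0:ℝ)..1, H t = ∫ u in (0:ℝ)..1, ((1 - u) * (u * f'' u)) := by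
      have hIoc2 : IntegrableOn (fun u => u * f'' u) (Ioc 0 1) volume := by
        have := hprod (fun u => u) continuous_id 0 1 (by norm_num) (by norm_num)
        rw [intervalIntegrable_iff_integrableOn_Ioc_of_le (by norm_num : (0:ℝ) ≤ 1)] at this
        exact this
      have := fubw (fun u => u * f'' u) (fun _ => 1) 1 1 one_pos one_pos.le hIoc2
        continuous_const (by intro x _; norm_num)
      simp only [one_mul, intervalIntegral.integral_const, smul_eq_mul, mul_one] at this
      exact this
    rw [c3, c4]
    have c5 : (∫ u in (0:ℝ)..1, ((1 - u^2)/2) * f'' u) - (∫ u in (0:ℝ)..1, ((1 - u) * (u * f'' u)))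
        = ∫ u in (0:ℝ)..1, ((1-u)^2/2) * f'' u := by
      have i4 : IntervalIntegrable (fun u => (1 - u^2)/2 * f'' u) volume 0 1 :=
        hprod (fun u => (1 - u^2)/2) (by fun_prop) 0 1 (by norm_num) (by norm_num)
      have i5 : IntervalIntegrable (fun u => (1 - u) * (u * f'' u)) volume 0 1 := by
        have := hprod (fun u => (1-u)*u) (by fun_prop) 0 1 (by norm_num) (by norm_num)
        have e : (fun u => (1-u)*u * f'' u) = (fun u => (1 - u) * (u * f'' u)) := by
          funext u; ring
        rwa [e] at this
      rw [← intervalIntegral.integral_sub i4 i5]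
      apply intervalIntegral.integral_congr
      intro u _
      ring
    rw [c5]
    simp
    ring
    -- values at the nodes
  have vhalf : f (1/2) = f 0 + f' 0 * (1/2) + ∫ u in (0:ℝ)..(1/2), ((1:ℝ)/2 - u) * f'' u :=
    hfp (1/2) (by norm_num)
  have v1 : f 1 = f 0 + f' 0 * 1 + ∫ u in (0:ℝ)..1, ((1:ℝ) - u) * f'' u :=
    hfp 1 (by norm_num)
  -- splitting integrals at 1/2
  have half1 : (1/2 : ℝ) ∈ Icc (0:ℝ) 1 := by norm_num
  have zero1 : (0 : ℝ) ∈ Icc (0:ℝ) 1 := by norm_num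
  have one1 : (1 : ℝ) ∈ Icc (0:ℝ) 1 := by norm_num
  have s1 : ∫ u in (0:ℝ)..1, ((1-u)^2/2) * f'' u
      = (∫ u in (0:ℝ)..(1/2), ((1-u)^2/2) * f'' u)
        + ∫ u in (1/2:ℝ)..1, ((1-u)^2/2) * f'' u :=
    (intervalIntegral.integral_add_adjacent_intervals
      (hprod (fun u => (1-u)^2/2) (by fun_prop) 0 (1/2) zero1 half1)
      (hprod (fun u => (1-u)^2/2) (by fun_prop) (1/2) 1 half1 one1)).symm
  have s2 : ∫ u in (0:ℝ)..1, ((1:ℝ) - u) * f'' u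
      = (∫ u in (0:ℝ)..(1/2), ((1:ℝ) - u) * f'' u)
        + ∫ u in (1/2:ℝ)..1, ((1:ℝ) - u) * f'' u :=
    (intervalIntegral.integral_add_adjacent_intervals
      (hprod (fun u => (1:ℝ) - u) (by fun_prop) 0 (1/2) zero1 half1)
      (hprod (fun u => (1:ℝ) - u) (by fun_prop) (1/2) 1 half1 one1)).symm
  have sK : ∫ u in (0:ℝ)..1, KK u * f'' u
      = (∫ u in (0:ℝ)..(1/2), KK u * f'' u) + ∫ u in (1/2:ℝ)..1, KK u * f'' u :=
    (intervalIntegral.integral_add_adjacent_intervals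
      (hprod KK KK_cont 0 (1/2) zero1 half1)
      (hprod KK KK_cont (1/2) 1 half1 one1)).symm
  -- kernel pieces
  have p1 : ∫ u in (0:ℝ)..(1/2), KK u * f'' u
      = (∫ u in (0:ℝ)..(1/2), ((1-u)^2/2) * f'' u)
        - (1 - Real.sqrt 2/4) * (∫ u in (0:ℝ)..(1/2), ((1:ℝ)/2 - u) * f'' u)
        - Real.sqrt 2/8 * (∫ u in (0:ℝ)..(1/2), ((1:ℝ) - u) * f'' u) := by
    rw [← intervalIntegral.integral_const_mul, ← intervalIntegral.integral_const_mul,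
      ← intervalIntegral.integral_sub
        (hprod (fun u => (1-u)^2/2) (by fun_prop) 0 (1/2) zero1 half1)
        ((hprod (fun u => (1:ℝ)/2 - u) (by fun_prop) 0 (1/2) zero1 half1).const_mul _),
      ← intervalIntegral.integral_sub]
    · apply intervalIntegral.integral_congr
      intro u hu
      rw [uIcc_of_le (by norm_num : (0:ℝ) ≤ 1/2)] at hu
      simp only [KK, if_pos hu.2]
      ring
    · exact (hprod (fun u => (1-u)^2/2) (by fun_prop) 0 (1/2) zero1 half1).sub
        ((hprod (fun u => (1:ℝ)/2 - u) (by fun_prop) 0 (1/2) zero1 half1).const_mul _)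
    · exact (hprod (fun u => (1:ℝ) - u) (by fun_prop) 0 (1/2) zero1 half1).const_mul _
  have p2 : ∫ u in (1/2:ℝ)..1, KK u * f'' u
      = (∫ u in (1/2:ℝ)..1, ((1-u)^2/2) * f'' u)
        - Real.sqrt 2/8 * (∫ u in (1/2:ℝ)..1, ((1:ℝ) - u) * f'' u) := by
    rw [← intervalIntegral.integral_const_mul,
      ← intervalIntegral.integral_sub
        (hprod (fun u => (1-u)^2/2) (by fun_prop) (1/2) 1 half1 one1)
        ((hprod (fun u => (1:ℝ) - u) (by fun_prop) (1/2) 1 half1 one1).const_mul _)]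
    apply intervalIntegral.integral_congr
    intro u hu
    rw [uIcc_of_le (by norm_num : (1/2:ℝ) ≤ 1)] at hu
    simp only [KK]
    by_cases h : u ≤ 1/2
    · have hu2 : u = 1/2 := le_antisymm h hu.1
      rw [if_pos h, hu2]
      ring_nf
    · rw [if_neg h]
      ring
  rw [hint, vhalf, v1, sK, p1, p2, s1, s2]
  ring


lemma cs2 (p q : ℝ → ℝ) (hp : IntervalIntegrable (fun t => (p t)^2) volume 0 1)
    (hq : IntervalIntegrable (fun t => (q t)^2) volume 0 1)
    (hpq : IntervalIntegrable (fun t => p t * q t) volume 0 1) :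
    (∫ t in (0:ℝ)..1, p t * q t)^2
      ≤ (∫ t in (0:ℝ)..1, (p t)^2) * (∫ t in (0:ℝ)..1, (q t)^2) := by
  set A := ∫ t in (0:ℝ)..1, (p t)^2 with hA
  set B := ∫ t in (0:ℝ)..1, p t * q t with hB
  set C := ∫ t in (0:ℝ)..1, (q t)^2 with hC
  have key : ∀ x : ℝ, 0 ≤ A * (x * x) + (2*B) * x + C := by
    intro x
    have e : A * (x*x) + (2*B)*x + C = ∫ t in (0:ℝ)..1, ((x * p t + q t)^2) := by
      rw [show (fun t => (x * p t + q t)^2)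
          = fun t => (x*x) * (p t)^2 + (2*x) * (p t * q t) + (q t)^2 from
        funext fun t => by ring]
      rw [intervalIntegral.integral_add ((hp.const_mul _).add (hpq.const_mul _)) hq,
        intervalIntegral.integral_add (hp.const_mul _) (hpq.const_mul _),
        intervalIntegral.integral_const_mul, intervalIntegral.integral_const_mul,
        ← hA, ← hB, ← hC]
      ring
    rw [e]
    apply intervalIntegral.integral_nonneg (by norm_num)
    intro t _
    positivity
  have hd := discrim_le_zero key
  simp only [discrim] at hd
  nlinarith [hd]

theorem stmt_17 :
    (∀ f f' f'' : ℝ → ℝ,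
      (∀ t ∈ Icc (0:ℝ) 1, f t = f 0 + ∫ s in (0:ℝ)..t, f' s) →
      (∀ t ∈ Icc (0:ℝ) 1, f' t = f' 0 + ∫ s in (0:ℝ)..t, f'' s) →
      IntervalIntegrable f'' volume 0 1 →
      IntervalIntegrable (fun t => (f'' t)^2) volume 0 1 →
      |((∫ t in (0:ℝ)..1, f t) - Real.sqrt 2 / 8 * f 0
          - (1 - Real.sqrt 2 / 4) * f (1/2) - Real.sqrt 2 / 8 * f 1)
        - (4 - 3 * Real.sqrt 2) / 96 * (f' 1 - f' 0)|
        ≤ Real.sqrt (47/23040 - Real.sqrt 2 / 768) *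
            Real.sqrt ((∫ t in (0:ℝ)..1, (f'' t)^2) - (f' 1 - f' 0)^2)) ∧
    ∀ c : ℝ,
      (∀ f f' f'' : ℝ → ℝ,
        (∀ t ∈ Icc (0:ℝ) 1, f t = f 0 + ∫ s in (0:ℝ)..t, f' s) →
        (∀ t ∈ Icc (0:ℝ) 1, f' t = f' 0 + ∫ s in (0:ℝ)..t, f'' s) →
        IntervalIntegrable f'' volume 0 1 →
        IntervalIntegrable (fun t => (f'' t)^2) volume 0 1 →
        |((∫ t in (0:ℝ)..1, f t) - Real.sqrt 2 / 8 * f 0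
            - (1 - Real.sqrt 2 / 4) * f (1/2) - Real.sqrt 2 / 8 * f 1)
          - (4 - 3 * Real.sqrt 2) / 96 * (f' 1 - f' 0)|
          ≤ c * Real.sqrt ((∫ t in (0:ℝ)..1, (f'' t)^2) - (f' 1 - f' 0)^2)) →
      Real.sqrt (47/23040 - Real.sqrt 2 / 768) ≤ c := by
  constructor
  · intro f f' f'' hf hf' h2 h3
    have hQ := keyA f f' f'' hf hf' h2
    set m := f' 1 - f' 0 with hmdef
    have hm : m = ∫ u in (0:ℝ)..1, f'' u := by
      rw [hmdef, hf' 1 (by norm_num)]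
      ring
    have hKKint : IntervalIntegrable (fun u => KK u * f'' u) volume 0 1 :=
      h2.continuousOn_mul KK_cont.continuousOn
    have hhhint : IntervalIntegrable (fun u => hh u * f'' u) volume 0 1 :=
      h2.continuousOn_mul hh_cont.continuousOn
    have hqint : IntervalIntegrable (fun u => (f'' u - m)^2) volume 0 1 := by
      rw [show (fun u => (f'' u - m)^2)
          = fun u => (f'' u)^2 - (2*m) * f'' u + m^2 from funext fun u => by ring]
      exact (h3.sub (h2.const_mul _)).add intervalIntegrable_const
    have hpqint : IntervalIntegrable (fun u => hh u * (f'' u - m)) volume 0 1 :=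
      (h2.sub intervalIntegrable_const).continuousOn_mul hh_cont.continuousOn
    have a1 : ∫ u in (0:ℝ)..1, hh u * f'' u
        = (∫ u in (0:ℝ)..1, KK u * f'' u) - (4 - 3 * Real.sqrt 2)/96 * m := by
      rw [hm, ← intervalIntegral.integral_const_mul,
        ← intervalIntegral.integral_sub hKKint (h2.const_mul _)]
      apply intervalIntegral.integral_congr
      intro u _
      simp only [hh]
      ring
    have a2 : ∫ u in (0:ℝ)..1, hh u * (f'' u - m)
        = ∫ u in (0:ℝ)..1, hh u * f'' u := by
      rw [show (fun u => hh u * (f'' u - m))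
          = fun u => hh u * f'' u - m * hh u from funext fun u => by ring]
      rw [intervalIntegral.integral_sub hhhint
        ((hh_cont.intervalIntegrable _ _).const_mul _),
        intervalIntegral.integral_const_mul, hh_int_zero]
      ring
    have b1 : ∫ u in (0:ℝ)..1, (f'' u - m)^2 = (∫ t in (0:ℝ)..1, (f'' t)^2) - m^2 := by
      rw [show (fun u => (f'' u - m)^2)
          = fun u => (f'' u)^2 - (2*m) * f'' u + m^2 from funext fun u => by ring]
      rw [intervalIntegral.integral_add (h3.sub (h2.const_mul _)) intervalIntegrable_const,
        intervalIntegral.integral_sub h3 (h2.const_mul _),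
        intervalIntegral.integral_const_mul, ← hm, intervalIntegral.integral_const]
      simp
      ring
    have cs := cs2 hh (fun u => f'' u - m) ((hh_cont.pow 2).intervalIntegrable _ _)
      hqint hpqint
    rw [hh_sq_int, b1] at cs
    have hexpr : ((∫ t in (0:ℝ)..1, f t) - Real.sqrt 2 / 8 * f 0
          - (1 - Real.sqrt 2 / 4) * f (1/2) - Real.sqrt 2 / 8 * f 1)
        - (4 - 3 * Real.sqrt 2) / 96 * m
        = ∫ u in (0:ℝ)..1, hh u * (f'' u - m) := by
      rw [a2, a1, ← hQ]
    rw [hexpr]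
    calc |∫ u in (0:ℝ)..1, hh u * (f'' u - m)|
        ≤ Real.sqrt ((47/23040 - Real.sqrt 2/768)
            * ((∫ t in (0:ℝ)..1, (f'' t)^2) - m^2)) := Real.abs_le_sqrt cs
      _ = Real.sqrt (47/23040 - Real.sqrt 2 / 768)
            * Real.sqrt ((∫ t in (0:ℝ)..1, (f'' t)^2) - m^2) :=
          Real.sqrt_mul Cpos.le _
  · intro c hc
    have h2 : IntervalIntegrable hh volume 0 1 := hh_cont.intervalIntegrable _ _
    have h3 : IntervalIntegrable (fun t => (hh t)^2) volume 0 1 :=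
      (hh_cont.pow 2).intervalIntegrable _ _
    set F' : ℝ → ℝ := fun t => ∫ s in (0:ℝ)..t, hh s with hF'
    set F : ℝ → ℝ := fun t => ∫ s in (0:ℝ)..t, F' s with hF
    have hyp1 : ∀ t ∈ Icc (0:ℝ) 1, F t = F 0 + ∫ s in (0:ℝ)..t, F' s := by
      intro t _
      simp [hF]
    have hyp2 : ∀ t ∈ Icc (0:ℝ) 1, F' t = F' 0 + ∫ s in (0:ℝ)..t, hh s := by
      intro t _
      simp [hF']
    have key := keyA F F' hh hyp1 hyp2 h2
    have hF'10 : F' 1 - F' 0 = 0 := by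
      simp [hF', hh_int_zero]
    have hKh : ∫ u in (0:ℝ)..1, KK u * hh u = 47/23040 - Real.sqrt 2/768 := by
      rw [show (fun u => KK u * hh u)
          = fun u => (hh u)^2 + (4 - 3 * Real.sqrt 2)/96 * hh u from
        funext fun u => by simp only [hh]; ring]
      rw [intervalIntegral.integral_add h3 (h2.const_mul _),
        intervalIntegral.integral_const_mul, hh_int_zero, hh_sq_int]
      ring
    have happ := hc F F' hh hyp1 hyp2 h2 h3
    rw [key, hF'10, hKh, hh_sq_int] at happ
    simp only [mul_zero, ne_eq, OfNat.ofNat_ne_zero, not_false_eq_true, zero_pow, sub_zero] at happ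
    rw [abs_of_pos Cpos] at happ
    have hr : 0 < Real.sqrt (47/23040 - Real.sqrt 2 / 768) := Real.sqrt_pos.mpr Cpos
    nlinarith [happ, hr, Real.sq_sqrt Cpos.le]
end
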